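/- Let V = ℍⁿ with standard quaternionic structure, W = ℍ^{n−1} ⊕ Im ℍ ⊂ V, and let φ = (A, a) ∈ GL_n(ℍ)·Sp₁ act by v ↦ A v a⁻¹. If φ(W) ⊆ W then with respect to the decomposition V = ℍ^{n−1} ⊕ ℍ, A has block form [[A₁, A₂],[0, λa]] for some A₁ ∈ GL_{n−1}(ℍ), A₂ ∈ Hom_ℍ(ℍ, ℍ^{n−1}) and λ ∈ ℝ \ {0}. -/

import Mathlib

open scoped Quaternion

private lemma quat_re_mul_comm (x y : ℍ[ℝ]) : (x * y).re = (y * x).re := by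
  simp [Quaternion.re_mul]; ring

private lemma quat_eq_zero (x : ℍ[ℝ]) (h : ∀ q : ℍ[ℝ], (x * q).re = 0) : x = 0 := by
  have h1 := h 1
  have hi := h ⟨0,1,0,0⟩
  have hj := h ⟨0,0,1,0⟩
  have hk := h ⟨0,0,0,1⟩
  erw [Quaternion.re_mul] at hi hj hk
  simp [Quaternion.re_mul] at *
  ext <;> simp <;> linarith

private lemma quat_real (x : ℍ[ℝ]) (h : ∀ q : ℍ[ℝ], q.re = 0 → (x * q).re = 0) :
    x = (x.re : ℍ[ℝ]) := by
  have hi := h ⟨0,1,0,0⟩ rfl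
  have hj := h ⟨0,0,1,0⟩ rfl
  have hk := h ⟨0,0,0,1⟩ rfl
  erw [Quaternion.re_mul] at hi hj hk
  simp [Quaternion.re_mul] at *
  ext <;> simp [hi, hj, hk]

private lemma last_row_repr
    (n : ℕ)
    (A : (Fin (n + 1) → ℍ[ℝ]) ≃ₗ[ℝ] (Fin (n + 1) → ℍ[ℝ]))
    (hA : ∀ (v : Fin (n + 1) → ℍ[ℝ]) (c : ℍ[ℝ]),
      A (fun m => v m * c) = fun m => A v m * c)
    (v : Fin (n+1) → ℍ[ℝ]) :
    A v (Fin.last n) = ∑ m, A (Pi.single m 1) (Fin.last n) * v m := by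
  have hv : v = ∑ m, (fun k => (Pi.single m 1 : Fin (n+1) → ℍ[ℝ]) k * v m) := by
    funext k
    simp [Pi.single_apply, Finset.sum_apply]
  calc A v (Fin.last n)
      = A (∑ m, (fun k => (Pi.single m 1 : Fin (n+1) → ℍ[ℝ]) k * v m)) (Fin.last n) := by
        rw [← hv]
    _ = ∑ m, A (fun k => (Pi.single m 1 : Fin (n+1) → ℍ[ℝ]) k * v m) (Fin.last n) := by
        rw [map_sum, Finset.sum_apply]
    _ = ∑ m, A (Pi.single m 1) (Fin.last n) * v m := by
        refine Finset.sum_congr rfl fun m _ => ?_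
        rw [hA (Pi.single m 1) (v m)]

/-- Let `V = ℍ^{n+1}` (right ℍ-module), `W = ℍⁿ ⊕ Im ℍ` the
hyperplane where the last coordinate is imaginary, and `φ = (A, a)` acting by
`v ↦ A v a⁻¹` with `A` right-ℍ-linear invertible and `a` a unit quaternion.  If
`φ(W) ⊆ W` then `A` has block form `[[A₁, A₂], [0, λ a]]`: the last row of `A`
vanishes on the first `n` coordinates and the last diagonal block is `λ a` for some
nonzero real `λ` (so `A` preserves `U = ℍⁿ × {0}`, inducing `A₁` there, with `A₂`
the remaining upper block). -/
theorem stabilizer_of_CR_hyperplane_block_form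
    (n : ℕ) (hn : 1 ≤ n)
    (A : (Fin (n + 1) → ℍ[ℝ]) ≃ₗ[ℝ] (Fin (n + 1) → ℍ[ℝ]))
    (hA : ∀ (v : Fin (n + 1) → ℍ[ℝ]) (c : ℍ[ℝ]),
      A (fun m => v m * c) = fun m => A v m * c)
    (a : ℍ[ℝ]) (ha : ‖a‖ = 1)
    (hW : ∀ v : Fin (n + 1) → ℍ[ℝ], (v (Fin.last n)).re = 0 →
      ((A v (Fin.last n)) * a⁻¹).re = 0) :
    (∀ v : Fin (n + 1) → ℍ[ℝ], v (Fin.last n) = 0 → A v (Fin.last n) = 0) ∧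
      ∃ l : ℝ, l ≠ 0 ∧
        ∀ v : Fin (n + 1) → ℍ[ℝ], A v (Fin.last n) = l • (a * v (Fin.last n)) := by
  have ha0 : a ≠ 0 := by
    intro h; rw [h] at ha; simp at ha
  set B : Fin (n+1) → ℍ[ℝ] := fun m => A (Pi.single m 1) (Fin.last n) with hB
  -- the off-diagonal entries of the last row vanish
  have hBzero : ∀ m : Fin (n+1), m ≠ Fin.last n → B m = 0 := by
    intro m hm
    apply quat_eq_zero
    intro q
    have key := hW (fun k => (Pi.single m 1 : Fin (n+1) → ℍ[ℝ]) k * (q * a)) ?_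
    · have h1 : A (fun k => (Pi.single m 1 : Fin (n+1) → ℍ[ℝ]) k * (q * a)) (Fin.last n)
          = B m * (q * a) := by
        rw [hA (Pi.single m 1) (q * a)]
      rw [h1] at key
      have h2 : B m * (q * a) * a⁻¹ = B m * q := by
        rw [mul_assoc (B m), mul_assoc, mul_inv_cancel₀ ha0, mul_one]
      rwa [h2] at key
    · simp [Pi.single_apply, hm.symm]
  -- the conjugated last diagonal entry is real
  have hBreal : a⁻¹ * B (Fin.last n) = ((a⁻¹ * B (Fin.last n)).re : ℍ[ℝ]) := by
    apply quat_real
    intro q hq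
    have key := hW (fun k => (Pi.single (Fin.last n) 1 : Fin (n+1) → ℍ[ℝ]) k * q) ?_
    · have h1 : A (fun k => (Pi.single (Fin.last n) 1 : Fin (n+1) → ℍ[ℝ]) k * q) (Fin.last n)
          = B (Fin.last n) * q := by
        rw [hA (Pi.single (Fin.last n) 1) q]
      rw [h1] at key
      calc (a⁻¹ * B (Fin.last n) * q).re
          = (a⁻¹ * (B (Fin.last n) * q)).re := by rw [mul_assoc]
        _ = (B (Fin.last n) * q * a⁻¹).re := quat_re_mul_comm _ _
        _ = 0 := key
    · simp [hq]
  set l : ℝ := (a⁻¹ * B (Fin.last n)).re with hl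
  have hBlast : B (Fin.last n) = a * (l : ℍ[ℝ]) := by
    have : a * (a⁻¹ * B (Fin.last n)) = a * (l : ℍ[ℝ]) := by rw [← hBreal]
    rwa [← mul_assoc, mul_inv_cancel₀ ha0, one_mul] at this
  -- last row formula
  have hrow : ∀ v : Fin (n+1) → ℍ[ℝ],
      A v (Fin.last n) = B (Fin.last n) * v (Fin.last n) := by
    intro v
    rw [last_row_repr n A hA v]
    rw [Finset.sum_eq_single (Fin.last n)]
    · intro m _ hm
      rw [show A (Pi.single m 1) (Fin.last n) = B m from rfl, hBzero m hm, zero_mul]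
    · intro h; exact absurd (Finset.mem_univ _) h
  -- l ≠ 0
  have hlne : l ≠ 0 := by
    intro h0
    have hB0 : B (Fin.last n) = 0 := by rw [hBlast, h0]; simp
    have := hrow (A.symm (Pi.single (Fin.last n) 1))
    rw [hB0, zero_mul, A.apply_symm_apply] at this
    simp [Pi.single_apply] at this
  refine ⟨?_, l, hlne, ?_⟩
  · intro v hv
    rw [hrow v, hv, mul_zero]
  · intro v
    rw [hrow v, hBlast]
    rw [mul_assoc, Quaternion.coe_mul_eq_smul, mul_smul_comm]
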